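/- Let ℓ_2 be a graded antisymmetric chain map of weight 0 on V vanishing on V_1 × V_1 with associated bracket [−,−] on G(V), and let J be the Jacobiator associated with an antisymmetric trilinear map ℓ_3 : V_0^3 → V_1 satisfying the L-infinity condition n = 3 (and vanishing in total degree ≥ 1). Then the assignment ℓ_4 ↦ μ, μ_{xyzu} = ([[[x,y],z],u], h_{xyzu}, −ℓ_4(x,y,z,u)), is a bijection between: (a) antisymmetric quadrilinear maps ℓ_4 : V_0^4 → V_2 satisfying, for all x,y,z,u ∈ V_0 and f ∈ V_1, d(ℓ_4(x,y,z,u)) − h_{xyzu} + e_{xyzu} = 0 and ℓ_4(d f, x, y, z) = 0 (these express the L-infinity condition n = 4 under the stated vanishing assumptions on ℓ_2 and ℓ_3); and (b) skew-symmetric quadrilinear 2-modifications μ : η ⇛ ε (Identiators). -/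

import Mathlib

/- The linear 2-category G(V) associated with a 3-term chain complex
   V₂ --d₂--> V₁ --d₁--> V₀ (d₁ ∘ d₂ = 0):
   L₀ = V₀, L₁ = V₀ × V₁, L₂ = V₀ × V₁ × V₂,
   s(v₀,…,v_m) = (v₀,…,v_{m-1}), t(v₀,…,v_m) = (v₀,…,v_{m-1} + d v_m),
   1_{(v₀,…,v_m)} = (v₀,…,v_m,0),
   (v₀,…,v_m) ∘_p (w₀,…,w_m) = (v₀,…,v_p, v_{p+1}+w_{p+1}, …, v_m+w_m). -/

namespace GV

variable {K : Type} [Field K] {V0 V1 V2 : Type}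
  [AddCommGroup V0] [AddCommGroup V1] [AddCommGroup V2]
  [Module K V0] [Module K V1] [Module K V2]

variable (d1 : V1 →ₗ[K] V0) (d2 : V2 →ₗ[K] V1)

/-- Source of a 1-cell. -/
def s1 (v : V0 × V1) : V0 := v.1

/-- Target of a 1-cell. -/
def t1 (v : V0 × V1) : V0 := v.1 + d1 v.2

/-- Source of a 2-cell. -/
def s2 (v : V0 × V1 × V2) : V0 × V1 := (v.1, v.2.1)

/-- Target of a 2-cell. -/
def t2 (v : V0 × V1 × V2) : V0 × V1 := (v.1, v.2.1 + d2 v.2.2)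

/-- Identity 1-cell on a 0-cell. -/
def one0 (x : V0) : V0 × V1 := (x, 0)

/-- Identity 2-cell on a 1-cell. -/
def one1 (v : V0 × V1) : V0 × V1 × V2 := (v.1, v.2, 0)

/-- Composition of 1-cells along a 0-cell. -/
def comp01 (v w : V0 × V1) : V0 × V1 := (v.1, v.2 + w.2)

/-- Composition of 2-cells along a 0-cell. -/
def comp02 (v w : V0 × V1 × V2) : V0 × V1 × V2 := (v.1, v.2.1 + w.2.1, v.2.2 + w.2.2)

/-- Composition of 2-cells along a 1-cell. -/
def comp12 (v w : V0 × V1 × V2) : V0 × V1 × V2 := (v.1, v.2.1, v.2.2 + w.2.2)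

/-- Composability of 1-cells along a 0-cell: `t v = s w`. -/
def Comp01 (v w : V0 × V1) : Prop := t1 d1 v = s1 w

/-- Composability of 2-cells along a 0-cell: `t² v = s² w`. -/
def Comp02 (v w : V0 × V1 × V2) : Prop := t1 d1 (t2 d2 v) = s1 (s2 w)

/-- Composability of 2-cells along a 1-cell: `t v = s w`. -/
def Comp12 (v w : V0 × V1 × V2) : Prop := t2 d2 v = s2 w


/-- A graded antisymmetric chain map `ℓ₂` of weight 0 on `V = (V₀,V₁,V₂)` which
vanishes on `V₁ × V₁`. -/
structure Ell2 (K : Type) [Field K] (V0 V1 V2 : Type)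
    [AddCommGroup V0] [AddCommGroup V1] [AddCommGroup V2]
    [Module K V0] [Module K V1] [Module K V2]
    (d1 : V1 →ₗ[K] V0) (d2 : V2 →ₗ[K] V1) : Type where
  l00 : V0 → V0 → V0
  l01 : V0 → V1 → V1
  l10 : V1 → V0 → V1
  l02 : V0 → V2 → V2
  l20 : V2 → V0 → V2
  l11 : V1 → V1 → V2
  bil00 : (∀ x, IsLinearMap K (l00 x)) ∧ (∀ y, IsLinearMap K (fun x => l00 x y))
  bil01 : (∀ x, IsLinearMap K (l01 x)) ∧ (∀ g, IsLinearMap K (fun x => l01 x g))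
  bil10 : (∀ f, IsLinearMap K (l10 f)) ∧ (∀ y, IsLinearMap K (fun f => l10 f y))
  bil02 : (∀ x, IsLinearMap K (l02 x)) ∧ (∀ b, IsLinearMap K (fun x => l02 x b))
  bil20 : (∀ a, IsLinearMap K (l20 a)) ∧ (∀ y, IsLinearMap K (fun a => l20 a y))
  bil11 : (∀ f, IsLinearMap K (l11 f)) ∧ (∀ g, IsLinearMap K (fun f => l11 f g))
  anti00 : ∀ x y, l00 x y = -l00 y x
  anti10 : ∀ f y, l10 f y = -l01 y f
  anti20 : ∀ a y, l20 a y = -l02 y a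
  anti11 : ∀ f g, l11 f g = l11 g f
  chain01 : ∀ x g, d1 (l01 x g) = l00 x (d1 g)
  chain10 : ∀ f y, d1 (l10 f y) = l00 (d1 f) y
  chain02 : ∀ x b, d2 (l02 x b) = l01 x (d2 b)
  chain20 : ∀ a y, d2 (l20 a y) = l10 (d2 a) y
  chain11 : ∀ f g, d2 (l11 f g) = l01 (d1 f) g - l10 f (d1 g)
  chain12 : ∀ f b, (0 : V2) = l02 (d1 f) b - l11 f (d2 b)
  vanish11 : ∀ f g, l11 f g = 0


variable {d1} {d2} in
/-- The bracket of 1-cells associated with `ℓ₂`: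
`[(x,f),(y,g)] = (ℓ₂(x,y), ℓ₂(x,g) + ℓ₂(f, y + d g))`. -/
def br1 (E : Ell2 K V0 V1 V2 d1 d2) (v w : V0 × V1) : V0 × V1 :=
  (E.l00 v.1 w.1, E.l01 v.1 w.2 + E.l10 v.2 (w.1 + d1 w.2))

variable {d1} {d2} in
/-- The bracket of 2-cells associated with `ℓ₂`:
`[(x,f,a),(y,g,b)] = (ℓ₂(x,y), ℓ₂(x,g) + ℓ₂(f, y + d g), ℓ₂(x,b) + ℓ₂(a,y))`. -/
def br2 (E : Ell2 K V0 V1 V2 d1 d2) (v w : V0 × V1 × V2) : V0 × V1 × V2 :=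
  (E.l00 v.1 w.1, E.l01 v.1 w.2.1 + E.l10 v.2.1 (w.1 + d1 w.2.1),
    E.l02 v.1 w.2.2 + E.l20 v.2.2 w.1)

end GV

namespace GV

variable {K : Type} [Field K] {V0 V1 V2 : Type}
  [AddCommGroup V0] [AddCommGroup V1] [AddCommGroup V2]
  [Module K V0] [Module K V1] [Module K V2]
  {d1 : V1 →ₗ[K] V0} {d2 : V2 →ₗ[K] V1}

/-- An antisymmetric trilinear map `ℓ₃ : V₀³ → V₁` satisfying the L∞ condition `n = 3`
(for its weight-1 graded antisymmetric extension by zero in total degree ≥ 1). -/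
structure Ell3 (E : Ell2 K V0 V1 V2 d1 d2) : Type where
  l3 : V0 → V0 → V0 → V1
  tri : (∀ x y, IsLinearMap K (l3 x y)) ∧
    (∀ x z, IsLinearMap K (fun y => l3 x y z)) ∧
    (∀ y z, IsLinearMap K (fun x => l3 x y z))
  anti12 : ∀ x y z, l3 x y z = -l3 y x z
  anti23 : ∀ x y z, l3 x y z = -l3 x z y
  cond1 : ∀ x y z, d1 (l3 x y z) + E.l00 (E.l00 x y) z - E.l00 (E.l00 x z) y +
      E.l00 (E.l00 y z) x = 0
  cond2 : ∀ x y f, E.l01 (E.l00 x y) f - E.l10 (E.l01 x f) y + E.l10 (E.l01 y f) x +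
      l3 (d1 f) x y = 0
  cond3 : ∀ x y a, E.l02 (E.l00 x y) a - E.l20 (E.l02 x a) y + E.l20 (E.l02 y a) x = 0

/-- A Jacobiator: a skew-symmetric trilinear natural 2-transformation
`[[−,−],•] ⇒ [[−,•],−] + [−,[−,•]]`. -/
structure Jacobiator (E : Ell2 K V0 V1 V2 d1 d2) : Type where
  J : V0 → V0 → V0 → V0 × V1
  tri : (∀ x y, IsLinearMap K (J x y)) ∧
    (∀ x z, IsLinearMap K (fun y => J x y z)) ∧
    (∀ y z, IsLinearMap K (fun x => J x y z))
  src : ∀ x y z, (J x y z).1 = E.l00 (E.l00 x y) z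
  tgt : ∀ x y z, t1 d1 (J x y z) = E.l00 (E.l00 x z) y + E.l00 x (E.l00 y z)
  anti12 : ∀ x y z, (J x y z).2 = -(J y x z).2
  anti23 : ∀ x y z, (J x y z).2 = -(J x z y).2
  nat3 : ∀ (x y z : V0) (f : V1) (a : V2),
      comp02 (br2 E (br2 E (x, 0, 0) (y, 0, 0)) (z, f, a))
          (one1 (J x y (t1 d1 (t2 d2 (z, f, a))))) =
        comp02 (one1 (J x y z))
          (br2 E (br2 E (x, 0, 0) (z, f, a)) (y, 0, 0) +
            br2 E (x, 0, 0) (br2 E (y, 0, 0) (z, f, a)))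
  nat1 : ∀ (x y z : V0) (f : V1) (a : V2),
      comp02 (br2 E (br2 E (x, f, a) (y, 0, 0)) (z, 0, 0))
          (one1 (J (t1 d1 (t2 d2 (x, f, a))) y z)) =
        comp02 (one1 (J x y z))
          (br2 E (br2 E (x, f, a) (z, 0, 0)) (y, 0, 0) +
            br2 E (x, f, a) (br2 E (y, 0, 0) (z, 0, 0)))
  nat2 : ∀ (x y z : V0) (f : V1) (a : V2),
      comp02 (br2 E (br2 E (x, 0, 0) (y, f, a)) (z, 0, 0))
          (one1 (J x (t1 d1 (t2 d2 (y, f, a))) z)) =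
        comp02 (one1 (J x y z))
          (br2 E (br2 E (x, 0, 0) (z, 0, 0)) (y, f, a) +
            br2 E (x, 0, 0) (br2 E (y, f, a) (z, 0, 0)))

end GV

namespace GV

variable {K : Type} [Field K] {V0 V1 V2 : Type}
  [AddCommGroup V0] [AddCommGroup V1] [AddCommGroup V2]
  [Module K V0] [Module K V1] [Module K V2]
  {d1 : V1 →ₗ[K] V0} {d2 : V2 →ₗ[K] V1}

/-- The Jacobiator 1-cell associated with `ℓ₃`: `J_{xyz} = ([[x,y],z], ℓ₃(x,y,z))`. -/
def Jc (E : Ell2 K V0 V1 V2 d1 d2) (T : Ell3 E) (x y z : V0) : V0 × V1 :=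
  (E.l00 (E.l00 x y) z, T.l3 x y z)

/-- The 1-cell
`η_{xyzu} = [J_{xyz},1_u] ∘₀ (J_{[x,z],y,u} + J_{x,[y,z],u}) ∘₀ ([J_{xzu},1_y] + 1)
  ∘₀ ([1_x,J_{yzu}] + 1)`, the unlabelled identity 1-cells being determined by
composability. -/
def eta (E : Ell2 K V0 V1 V2 d1 d2) (T : Ell3 E) (x y z u : V0) : V0 × V1 :=
  let g1 := br1 E (Jc E T x y z) (one0 u)
  let g2 := Jc E T (E.l00 x z) y u + Jc E T x (E.l00 y z) u
  let N3 := br1 E (Jc E T x z u) (one0 y)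
  let g3 := N3 + one0 (t1 d1 g2 - N3.1)
  let N4 := br1 E (one0 x) (Jc E T y z u)
  let g4 := N4 + one0 (t1 d1 g3 - N4.1)
  comp01 (comp01 (comp01 g1 g2) g3) g4

/-- The 1-cell
`ε_{xyzu} = J_{[x,y],z,u} ∘₀ ([J_{xyu},1_z] + 1)
  ∘₀ (J_{x,[y,u],z} + J_{[x,u],y,z} + J_{x,y,[z,u]})`. -/
def eps (E : Ell2 K V0 V1 V2 d1 d2) (T : Ell3 E) (x y z u : V0) : V0 × V1 :=
  let g1 := Jc E T (E.l00 x y) z u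
  let N2 := br1 E (Jc E T x y u) (one0 z)
  let g2 := N2 + one0 (t1 d1 g1 - N2.1)
  let g3 := Jc E T x (E.l00 y u) z + Jc E T (E.l00 x u) y z + Jc E T x y (E.l00 z u)
  comp01 (comp01 g1 g2) g3

/-- The quadrilinear 2-functor `F`, `F(α,β,γ,δ) = [[[α,β],γ],δ]`, on 2-cells. -/
def Fq (E : Ell2 K V0 V1 V2 d1 d2) (a b c d : V0 × V1 × V2) : V0 × V1 × V2 :=
  br2 E (br2 E (br2 E a b) c) d

/-- The quadrilinear 2-functor `G`,
`G(α,β,γ,δ) = [α,[[β,δ],γ]] + [α,[β,[γ,δ]]] + [[[α,δ],γ],β] + [[α,[γ,δ]],β]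
  + [[α,γ],[β,δ]] + [[α,δ],[β,γ]]`, on 2-cells. -/
def Gq (E : Ell2 K V0 V1 V2 d1 d2) (a b c d : V0 × V1 × V2) : V0 × V1 × V2 :=
  br2 E a (br2 E (br2 E b d) c) + br2 E a (br2 E b (br2 E c d)) +
    br2 E (br2 E (br2 E a d) c) b + br2 E (br2 E a (br2 E c d)) b +
    br2 E (br2 E a c) (br2 E b d) + br2 E (br2 E a d) (br2 E b c)

/-- An antisymmetric quadrilinear map `ℓ₄ : V₀⁴ → V₂` satisfying the L∞ condition
`n = 4` (in the form `d ℓ₄(x,y,z,u) − h_{xyzu} + e_{xyzu} = 0`, `ℓ₄(d f,x,y,z) = 0`). -/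
structure Ell4 (E : Ell2 K V0 V1 V2 d1 d2) (T : Ell3 E) : Type where
  l4 : V0 → V0 → V0 → V0 → V2
  quad : (∀ x y z, IsLinearMap K (l4 x y z)) ∧
    (∀ x y u, IsLinearMap K (fun z => l4 x y z u)) ∧
    (∀ x z u, IsLinearMap K (fun y => l4 x y z u)) ∧
    (∀ y z u, IsLinearMap K (fun x => l4 x y z u))
  anti12 : ∀ x y z u, l4 x y z u = -l4 y x z u
  anti23 : ∀ x y z u, l4 x y z u = -l4 x z y u
  anti34 : ∀ x y z u, l4 x y z u = -l4 x y u z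
  cond1 : ∀ x y z u,
      d2 (l4 x y z u) - (eta E T x y z u).2 + (eps E T x y z u).2 = 0
  cond2 : ∀ (f : V1) (x y z : V0), l4 (d1 f) x y z = 0

/-- An Identiator: a skew-symmetric quadrilinear 2-modification `μ : η ⇛ ε`. -/
structure Identiator (E : Ell2 K V0 V1 V2 d1 d2) (T : Ell3 E) : Type where
  mu : V0 → V0 → V0 → V0 → V0 × V1 × V2
  quad : (∀ x y z, IsLinearMap K (mu x y z)) ∧
    (∀ x y u, IsLinearMap K (fun z => mu x y z u)) ∧
    (∀ x z u, IsLinearMap K (fun y => mu x y z u)) ∧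
    (∀ y z u, IsLinearMap K (fun x => mu x y z u))
  src : ∀ x y z u, s2 (mu x y z u) = eta E T x y z u
  tgt : ∀ x y z u, t2 d2 (mu x y z u) = eps E T x y z u
  anti12 : ∀ x y z u, (mu x y z u).2.2 = -(mu y x z u).2.2
  anti23 : ∀ x y z u, (mu x y z u).2.2 = -(mu x z y u).2.2
  anti34 : ∀ x y z u, (mu x y z u).2.2 = -(mu x y u z).2.2
  mod4 : ∀ (x y z u : V0) (f : V1) (a : V2),
      comp02 (Fq E (x, 0, 0) (y, 0, 0) (z, 0, 0) (u, f, a))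
          (mu x y z (t1 d1 (t2 d2 (u, f, a)))) =
        comp02 (mu x y z u) (Gq E (x, 0, 0) (y, 0, 0) (z, 0, 0) (u, f, a))
  mod3 : ∀ (x y z u : V0) (f : V1) (a : V2),
      comp02 (Fq E (x, 0, 0) (y, 0, 0) (z, f, a) (u, 0, 0))
          (mu x y (t1 d1 (t2 d2 (z, f, a))) u) =
        comp02 (mu x y z u) (Gq E (x, 0, 0) (y, 0, 0) (z, f, a) (u, 0, 0))
  mod2 : ∀ (x y z u : V0) (f : V1) (a : V2),
      comp02 (Fq E (x, 0, 0) (y, f, a) (z, 0, 0) (u, 0, 0))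
          (mu x (t1 d1 (t2 d2 (y, f, a))) z u) =
        comp02 (mu x y z u) (Gq E (x, 0, 0) (y, f, a) (z, 0, 0) (u, 0, 0))
  mod1 : ∀ (x y z u : V0) (f : V1) (a : V2),
      comp02 (Fq E (x, f, a) (y, 0, 0) (z, 0, 0) (u, 0, 0))
          (mu (t1 d1 (t2 d2 (x, f, a))) y z u) =
        comp02 (mu x y z u) (Gq E (x, f, a) (y, 0, 0) (z, 0, 0) (u, 0, 0))

end GV

namespace GV

variable {K : Type} [Field K] {V0 V1 V2 : Type}
  [AddCommGroup V0] [AddCommGroup V1] [AddCommGroup V2]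
  [Module K V0] [Module K V1] [Module K V2]
  {d1 : V1 →ₗ[K] V0} {d2 : V2 →ₗ[K] V1}

section Lemmas
variable (E : Ell2 K V0 V1 V2 d1 d2) (T : Ell3 E)

-- linearity simp lemmas
lemma l00_addr (x : V0) (y y' : V0) : E.l00 x (y + y') = E.l00 x y + E.l00 x y' := (E.bil00.1 x).map_add y y'
lemma l00_addl (x x' y : V0) : E.l00 (x + x') y = E.l00 x y + E.l00 x' y := (E.bil00.2 y).map_add x x'
lemma l00_zeror (x : V0) : E.l00 x 0 = 0 := (E.bil00.1 x).map_zero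
lemma l00_zerol (y : V0) : E.l00 0 y = 0 := (E.bil00.2 y).map_zero
lemma l00_negr (x y : V0) : E.l00 x (-y) = -E.l00 x y := (E.bil00.1 x).map_neg y
lemma l00_negl (x y : V0) : E.l00 (-x) y = -E.l00 x y := (E.bil00.2 y).map_neg x
lemma l00_smulr (c : K) (x y : V0) : E.l00 x (c • y) = c • E.l00 x y := (E.bil00.1 x).map_smul c y
lemma l00_smull (c : K) (x y : V0) : E.l00 (c • x) y = c • E.l00 x y := (E.bil00.2 y).map_smul c x

lemma l01_addr (x : V0) (g g' : V1) : E.l01 x (g + g') = E.l01 x g + E.l01 x g' := (E.bil01.1 x).map_add g g'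
lemma l01_addl (x x' : V0) (g : V1) : E.l01 (x + x') g = E.l01 x g + E.l01 x' g := (E.bil01.2 g).map_add x x'
lemma l01_zeror (x : V0) : E.l01 x (0 : V1) = 0 := (E.bil01.1 x).map_zero
lemma l01_zerol (g : V1) : E.l01 (0 : V0) g = 0 := (E.bil01.2 g).map_zero
lemma l01_negr (x : V0) (g : V1) : E.l01 x (-g) = -E.l01 x g := (E.bil01.1 x).map_neg g
lemma l01_negl (x : V0) (g : V1) : E.l01 (-x) g = -E.l01 x g := (E.bil01.2 g).map_neg x
lemma l01_smulr (c : K) (x : V0) (g : V1) : E.l01 x (c • g) = c • E.l01 x g := (E.bil01.1 x).map_smul c g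
lemma l01_smull (c : K) (x : V0) (g : V1) : E.l01 (c • x) g = c • E.l01 x g := (E.bil01.2 g).map_smul c x

lemma l10_addr (f : V1) (y y' : V0) : E.l10 f (y + y') = E.l10 f y + E.l10 f y' := (E.bil10.1 f).map_add y y'
lemma l10_addl (f f' : V1) (y : V0) : E.l10 (f + f') y = E.l10 f y + E.l10 f' y := (E.bil10.2 y).map_add f f'
lemma l10_zeror (f : V1) : E.l10 f (0 : V0) = 0 := (E.bil10.1 f).map_zero
lemma l10_zerol (y : V0) : E.l10 (0 : V1) y = 0 := (E.bil10.2 y).map_zero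
lemma l10_negr (f : V1) (y : V0) : E.l10 f (-y) = -E.l10 f y := (E.bil10.1 f).map_neg y
lemma l10_negl (f : V1) (y : V0) : E.l10 (-f) y = -E.l10 f y := (E.bil10.2 y).map_neg f
lemma l10_smulr (c : K) (f : V1) (y : V0) : E.l10 f (c • y) = c • E.l10 f y := (E.bil10.1 f).map_smul c y
lemma l10_smull (c : K) (f : V1) (y : V0) : E.l10 (c • f) y = c • E.l10 f y := (E.bil10.2 y).map_smul c f

lemma l02_addr (x : V0) (b b' : V2) : E.l02 x (b + b') = E.l02 x b + E.l02 x b' := (E.bil02.1 x).map_add b b'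
lemma l02_addl (x x' : V0) (b : V2) : E.l02 (x + x') b = E.l02 x b + E.l02 x' b := (E.bil02.2 b).map_add x x'
lemma l02_zeror (x : V0) : E.l02 x (0 : V2) = 0 := (E.bil02.1 x).map_zero
lemma l02_zerol (b : V2) : E.l02 (0 : V0) b = 0 := (E.bil02.2 b).map_zero
lemma l02_negr (x : V0) (b : V2) : E.l02 x (-b) = -E.l02 x b := (E.bil02.1 x).map_neg b
lemma l02_negl (x : V0) (b : V2) : E.l02 (-x) b = -E.l02 x b := (E.bil02.2 b).map_neg x
lemma l02_smulr (c : K) (x : V0) (b : V2) : E.l02 x (c • b) = c • E.l02 x b := (E.bil02.1 x).map_smul c b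
lemma l02_smull (c : K) (x : V0) (b : V2) : E.l02 (c • x) b = c • E.l02 x b := (E.bil02.2 b).map_smul c x

lemma l20_addr (a : V2) (y y' : V0) : E.l20 a (y + y') = E.l20 a y + E.l20 a y' := (E.bil20.1 a).map_add y y'
lemma l20_addl (a a' : V2) (y : V0) : E.l20 (a + a') y = E.l20 a y + E.l20 a' y := (E.bil20.2 y).map_add a a'
lemma l20_zeror (a : V2) : E.l20 a (0 : V0) = 0 := (E.bil20.1 a).map_zero
lemma l20_zerol (y : V0) : E.l20 (0 : V2) y = 0 := (E.bil20.2 y).map_zero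
lemma l20_negr (a : V2) (y : V0) : E.l20 a (-y) = -E.l20 a y := (E.bil20.1 a).map_neg y
lemma l20_negl (a : V2) (y : V0) : E.l20 (-a) y = -E.l20 a y := (E.bil20.2 y).map_neg a
lemma l20_smulr (c : K) (a : V2) (y : V0) : E.l20 a (c • y) = c • E.l20 a y := (E.bil20.1 a).map_smul c y
lemma l20_smull (c : K) (a : V2) (y : V0) : E.l20 (c • a) y = c • E.l20 a y := (E.bil20.2 y).map_smul c a

lemma l3_add3 (x y : V0) (z z' : V0) : T.l3 x y (z + z') = T.l3 x y z + T.l3 x y z' := (T.tri.1 x y).map_add z z'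
lemma l3_add2 (x y y' z : V0) : T.l3 x (y + y') z = T.l3 x y z + T.l3 x y' z := (T.tri.2.1 x z).map_add y y'
lemma l3_add1 (x x' y z : V0) : T.l3 (x + x') y z = T.l3 x y z + T.l3 x' y z := (T.tri.2.2 y z).map_add x x'
lemma l3_zero3 (x y : V0) : T.l3 x y 0 = 0 := (T.tri.1 x y).map_zero
lemma l3_zero2 (x z : V0) : T.l3 x 0 z = 0 := (T.tri.2.1 x z).map_zero
lemma l3_zero1 (y z : V0) : T.l3 0 y z = 0 := (T.tri.2.2 y z).map_zero
lemma l3_neg3 (x y z : V0) : T.l3 x y (-z) = -T.l3 x y z := (T.tri.1 x y).map_neg z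
lemma l3_neg2 (x y z : V0) : T.l3 x (-y) z = -T.l3 x y z := (T.tri.2.1 x z).map_neg y
lemma l3_neg1 (x y z : V0) : T.l3 (-x) y z = -T.l3 x y z := (T.tri.2.2 y z).map_neg x
lemma l3_smul3 (c : K) (x y z : V0) : T.l3 x y (c • z) = c • T.l3 x y z := (T.tri.1 x y).map_smul c z
lemma l3_smul2 (c : K) (x y z : V0) : T.l3 x (c • y) z = c • T.l3 x y z := (T.tri.2.1 x z).map_smul c y
lemma l3_smul1 (c : K) (x y z : V0) : T.l3 (c • x) y z = c • T.l3 x y z := (T.tri.2.2 y z).map_smul c x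

/-- closed form of `eta`. -/
lemma eta_eq (x y z u : V0) :
    eta E T x y z u =
      (E.l00 (E.l00 (E.l00 x y) z) u,
        E.l10 (T.l3 x y z) u + T.l3 (E.l00 x z) y u + T.l3 x (E.l00 y z) u +
          E.l10 (T.l3 x z u) y + E.l01 x (T.l3 y z u)) := by
  simp only [eta, comp01, br1, Jc, one0, map_zero, add_zero, zero_add, l01_zeror, l10_zerol,
    Prod.mk_add_mk, Prod.mk.injEq, true_and]
  abel

/-- closed form of `eps`. -/
lemma eps_eq (x y z u : V0) :
    eps E T x y z u =
      (E.l00 (E.l00 (E.l00 x y) z) u,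
        T.l3 (E.l00 x y) z u + E.l10 (T.l3 x y u) z + T.l3 x (E.l00 y u) z +
          T.l3 (E.l00 x u) y z + T.l3 x y (E.l00 z u)) := by
  simp only [eps, comp01, br1, Jc, one0, map_zero, add_zero, zero_add, l01_zeror, l10_zerol,
    Prod.mk_add_mk, Prod.mk.injEq, true_and]
  abel


lemma hchain (f g : V1) : E.l01 (d1 f) g = E.l10 f (d1 g) := by
  have h := E.chain11 f g
  rw [E.vanish11, map_zero] at h
  rw [← sub_eq_zero]
  exact h.symm

lemma l01dd (f g : V1) : E.l01 (d1 f) g = -E.l01 (d1 g) f := by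
  rw [hchain, E.anti10]

lemma l3d1 (f : V1) (x y : V0) :
    T.l3 (d1 f) x y =
      -E.l01 (E.l00 x y) f + E.l10 (E.l01 x f) y - E.l10 (E.l01 y f) x := by
  have h := T.cond2 x y f
  rw [← sub_eq_zero, ← h]
  abel

lemma l3d3 (f : V1) (x y : V0) :
    T.l3 x y (d1 f) =
      -E.l01 (E.l00 x y) f + E.l10 (E.l01 x f) y - E.l10 (E.l01 y f) x := by
  rw [T.anti23, T.anti12, l3d1, neg_neg]

lemma l3d2 (f : V1) (x y : V0) :
    T.l3 x (d1 f) y =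
      E.l01 (E.l00 x y) f - E.l10 (E.l01 x f) y + E.l10 (E.l01 y f) x := by
  rw [T.anti12, l3d1]
  abel

lemma d1l3 (x y z : V0) :
    d1 (T.l3 x y z) =
      -E.l00 (E.l00 x y) z + E.l00 (E.l00 x z) y - E.l00 (E.l00 y z) x := by
  have h := T.cond1 x y z
  rw [← sub_eq_zero, ← h]
  abel

lemma l02c (T : Ell3 E) (x y : V0) (b : V2) :
    E.l02 (E.l00 x y) b = E.l20 (E.l02 x b) y - E.l20 (E.l02 y b) x := by
  have h := T.cond3 x y b
  rw [← sub_eq_zero, ← h]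
  abel

section WithQ
variable (Q : Ell4 E T)

lemma l4_add4 (x y z : V0) (u u' : V0) : Q.l4 x y z (u + u') = Q.l4 x y z u + Q.l4 x y z u' := (Q.quad.1 x y z).map_add u u'
lemma l4_add3 (x y z z' u : V0) : Q.l4 x y (z + z') u = Q.l4 x y z u + Q.l4 x y z' u := (Q.quad.2.1 x y u).map_add z z'
lemma l4_add2 (x y y' z u : V0) : Q.l4 x (y + y') z u = Q.l4 x y z u + Q.l4 x y' z u := (Q.quad.2.2.1 x z u).map_add y y'
lemma l4_add1 (x x' y z u : V0) : Q.l4 (x + x') y z u = Q.l4 x y z u + Q.l4 x' y z u := (Q.quad.2.2.2 y z u).map_add x x'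

lemma l4d1 (f : V1) (x y z : V0) : Q.l4 (d1 f) x y z = 0 := Q.cond2 f x y z
lemma l4d2 (f : V1) (x y z : V0) : Q.l4 x (d1 f) y z = 0 := by
  rw [Q.anti12, l4d1, neg_zero]
lemma l4d3 (f : V1) (x y z : V0) : Q.l4 x y (d1 f) z = 0 := by
  rw [Q.anti23, l4d2, neg_zero]
lemma l4d4 (f : V1) (x y z : V0) : Q.l4 x y z (d1 f) = 0 := by
  rw [Q.anti34, l4d3, neg_zero]

lemma mod4goal (hdd : ∀ a, d1 (d2 a) = 0) (x y z u : V0) (f : V1) (a : V2) :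
    comp02 (Fq E (x, 0, 0) (y, 0, 0) (z, 0, 0) (u, f, a))
        ((eta E T x y z (t1 d1 (t2 d2 (u, f, a)))).1,
          (eta E T x y z (t1 d1 (t2 d2 (u, f, a)))).2,
          -Q.l4 x y z (t1 d1 (t2 d2 (u, f, a)))) =
      comp02 ((eta E T x y z u).1, (eta E T x y z u).2, -Q.l4 x y z u)
        (Gq E (x, 0, 0) (y, 0, 0) (z, 0, 0) (u, f, a)) := by
  simp only [t1, t2, map_add, hdd, add_zero, Fq, Gq, br2, comp02, eta_eq,
    l00_addr, l01_addr, l10_addr, l02_addr, l20_addr, l00_zeror, l01_zeror, l10_zeror,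
    l02_zeror, l20_zeror, l00_zerol, l01_zerol, l10_zerol, l02_zerol, l20_zerol,
    l3_add3, l4_add4, l4d4, map_zero, zero_add,
    Prod.mk_add_mk, Prod.mk.injEq]
  refine ⟨trivial, ?_, ?_⟩
  · rw [l10_addl, E.anti10 (T.l3 x y z) (d1 f), l01dd, d1l3,
      l3d3 E T f (E.l00 x z) y, l3d3 E T f x (E.l00 y z), l3d3 E T f x z, l3d3 E T f y z,
      E.anti00 x (E.l00 y z)]
    simp only [sub_eq_add_neg, E.anti10, l01_addl, l01_negl, l01_addr, l01_negr,
      l00_negl, l00_negr, neg_neg, neg_add]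
    abel
  · rw [l02c E T (E.l00 x y) z a, l02c E T x y a]
    simp only [E.anti20, l02_negr, l02_addr, l02_negl, l02_addl, neg_neg, neg_add, sub_eq_add_neg]
    rw [l02c E T x y (E.l02 z a), l02c E T x z (E.l02 y a), l02c E T y z (E.l02 x a)]
    simp only [E.anti20, l02_negr, l02_addr, l02_negl, l02_addl, neg_neg, neg_add, sub_eq_add_neg]
    abel

lemma mod3goal (hdd : ∀ a, d1 (d2 a) = 0) (x y z u : V0) (f : V1) (a : V2) :
    comp02 (Fq E (x, 0, 0) (y, 0, 0) (z, f, a) (u, 0, 0))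
        ((eta E T x y (t1 d1 (t2 d2 (z, f, a))) u).1,
          (eta E T x y (t1 d1 (t2 d2 (z, f, a))) u).2,
          -Q.l4 x y (t1 d1 (t2 d2 (z, f, a))) u) =
      comp02 ((eta E T x y z u).1, (eta E T x y z u).2, -Q.l4 x y z u)
        (Gq E (x, 0, 0) (y, 0, 0) (z, f, a) (u, 0, 0)) := by
  simp only [t1, t2, map_add, hdd, add_zero, Fq, Gq, br2, comp02, eta_eq,
    l00_addr, l00_addl, l01_addr, l01_addl, l10_addr, l10_addl, l02_addr, l02_addl,
    l20_addr, l20_addl, l00_zeror, l01_zeror, l10_zeror,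
    l02_zeror, l20_zeror, l00_zerol, l01_zerol, l10_zerol, l02_zerol, l20_zerol,
    l3_add1, l3_add2, l3_add3, l4_add1, l4_add2, l4_add3, l4_add4,
    l4d1, l4d2, l4d3, l4d4, map_zero, zero_add,
    Prod.mk_add_mk, Prod.mk.injEq]
  refine ⟨trivial, ?_, ?_⟩
  · rw [← E.chain01 x f, ← E.chain01 y f, l3d3 E T f x y, l3d1 E T (E.l01 x f) y u,
      l3d2 E T (E.l01 y f) x u, l3d2 E T f x u, l3d2 E T f y u]
    simp only [sub_eq_add_neg, E.anti10, l10_addl, l10_negl, l01_addl, l01_negl,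
      l01_addr, l01_negr, l00_negl, l00_negr, neg_neg, neg_add]
    abel
  · rw [l02c E T x y a, l02c E T y u a, l02c E T x u a, l02c E T x u (E.l02 y a)]
    simp only [E.anti20, l02_negr, l02_addr, l02_negl, l02_addl, neg_neg, neg_add, sub_eq_add_neg]
    rw [l02c E T y u (E.l02 x a)]
    simp only [E.anti20, l02_negr, l02_addr, l02_negl, l02_addl, neg_neg, neg_add, sub_eq_add_neg]
    abel

lemma mod2goal (hdd : ∀ a, d1 (d2 a) = 0) (x y z u : V0) (f : V1) (a : V2) :
    comp02 (Fq E (x, 0, 0) (y, f, a) (z, 0, 0) (u, 0, 0))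
        ((eta E T x (t1 d1 (t2 d2 (y, f, a))) z u).1,
          (eta E T x (t1 d1 (t2 d2 (y, f, a))) z u).2,
          -Q.l4 x (t1 d1 (t2 d2 (y, f, a))) z u) =
      comp02 ((eta E T x y z u).1, (eta E T x y z u).2, -Q.l4 x y z u)
        (Gq E (x, 0, 0) (y, f, a) (z, 0, 0) (u, 0, 0)) := by
  simp only [t1, t2, map_add, hdd, add_zero, Fq, Gq, br2, comp02, eta_eq,
    l00_addr, l00_addl, l01_addr, l01_addl, l10_addr, l10_addl, l02_addr, l02_addl,
    l20_addr, l20_addl, l00_zeror, l01_zeror, l10_zeror,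
    l02_zeror, l20_zeror, l00_zerol, l01_zerol, l10_zerol, l02_zerol, l20_zerol,
    l3_add1, l3_add2, l3_add3, l4_add1, l4_add2, l4_add3, l4_add4,
    l4d1, l4d2, l4d3, l4d4, map_zero, zero_add,
    Prod.mk_add_mk, Prod.mk.injEq]
  refine ⟨trivial, ?_, ?_⟩
  · rw [← E.chain10 f z, E.anti10 (T.l3 x z u) (d1 f), l01dd, d1l3,
      l3d2 E T f x z, l3d2 E T f (E.l00 x z) u, l3d2 E T (E.l10 f z) x u, l3d1 E T f z u,
      E.anti00 x (E.l00 z u)]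
    simp only [sub_eq_add_neg, E.anti10, l10_addl, l10_negl, l01_addl, l01_negl,
      l01_addr, l01_negr, l00_negl, l00_negr, neg_neg, neg_add]
    abel
  · rw [l02c E T (E.l00 x u) z a, l02c E T x (E.l00 z u) a]
    simp only [E.anti20, l02_negr, l02_addr, l02_negl, l02_addl, neg_neg, neg_add, sub_eq_add_neg]
    rw [l02c E T x u a, l02c E T z u a, l02c E T x z (E.l02 u a), l02c E T x u (E.l02 z a),
      l02c E T z u (E.l02 x a)]
    simp only [E.anti20, l02_negr, l02_addr, l02_negl, l02_addl, neg_neg, neg_add, sub_eq_add_neg]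
    abel

lemma mod1goal (hdd : ∀ a, d1 (d2 a) = 0) (x y z u : V0) (f : V1) (a : V2) :
    comp02 (Fq E (x, f, a) (y, 0, 0) (z, 0, 0) (u, 0, 0))
        ((eta E T (t1 d1 (t2 d2 (x, f, a))) y z u).1,
          (eta E T (t1 d1 (t2 d2 (x, f, a))) y z u).2,
          -Q.l4 (t1 d1 (t2 d2 (x, f, a))) y z u) =
      comp02 ((eta E T x y z u).1, (eta E T x y z u).2, -Q.l4 x y z u)
        (Gq E (x, f, a) (y, 0, 0) (z, 0, 0) (u, 0, 0)) := by
  simp only [t1, t2, map_add, hdd, add_zero, Fq, Gq, br2, comp02, eta_eq,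
    l00_addr, l00_addl, l01_addr, l01_addl, l10_addr, l10_addl, l02_addr, l02_addl,
    l20_addr, l20_addl, l00_zeror, l01_zeror, l10_zeror,
    l02_zeror, l20_zeror, l00_zerol, l01_zerol, l10_zerol, l02_zerol, l20_zerol,
    l3_add1, l3_add2, l3_add3, l4_add1, l4_add2, l4_add3, l4_add4,
    l4d1, l4d2, l4d3, l4d4, map_zero, zero_add,
    Prod.mk_add_mk, Prod.mk.injEq]
  refine ⟨trivial, ?_, ?_⟩
  · rw [← E.chain10 f z, l01dd, d1l3,
      l3d1 E T f y z, l3d1 E T (E.l10 f z) y u, l3d1 E T f (E.l00 y z) u, l3d1 E T f z u,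
      E.anti00 y (E.l00 z u)]
    simp only [sub_eq_add_neg, E.anti10, l10_addl, l10_negl, l01_addl, l01_negl,
      l01_addr, l01_negr, l00_negl, l00_negr, neg_neg, neg_add]
    abel
  · simp only [E.anti20, l02_negr, l02_addr, l02_negl, l02_addl, neg_neg, neg_add, sub_eq_add_neg]
    rw [l02c E T (E.l00 y u) z a, l02c E T y (E.l00 z u) a]
    simp only [E.anti20, l02_negr, l02_addr, l02_negl, l02_addl, neg_neg, neg_add, sub_eq_add_neg]
    rw [l02c E T y u a, l02c E T z u a, l02c E T y z (E.l02 u a), l02c E T y u (E.l02 z a),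
      l02c E T z u (E.l02 y a)]
    simp only [E.anti20, l02_negr, l02_addr, l02_negl, l02_addl, neg_neg, neg_add, sub_eq_add_neg]
    abel

lemma l4_smul4 (c : K) (x y z u : V0) : Q.l4 x y z (c • u) = c • Q.l4 x y z u := (Q.quad.1 x y z).map_smul c u
lemma l4_smul3 (c : K) (x y z u : V0) : Q.l4 x y (c • z) u = c • Q.l4 x y z u := (Q.quad.2.1 x y u).map_smul c z
lemma l4_smul2 (c : K) (x y z u : V0) : Q.l4 x (c • y) z u = c • Q.l4 x y z u := (Q.quad.2.2.1 x z u).map_smul c y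
lemma l4_smul1 (c : K) (x y z u : V0) : Q.l4 (c • x) y z u = c • Q.l4 x y z u := (Q.quad.2.2.2 y z u).map_smul c x

/-- The Identiator associated with `ℓ₄`. -/
def toIden (hdd : ∀ a, d1 (d2 a) = 0) : Identiator E T where
  mu x y z u := ((eta E T x y z u).1, (eta E T x y z u).2, -Q.l4 x y z u)
  quad := by
    refine ⟨fun x y z => ⟨fun a b => ?_, fun c a => ?_⟩, fun x y u => ⟨fun a b => ?_, fun c a => ?_⟩,
      fun x z u => ⟨fun a b => ?_, fun c a => ?_⟩, fun y z u => ⟨fun a b => ?_, fun c a => ?_⟩⟩ <;>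
    simp only [eta_eq, l00_addr, l00_addl, l01_addr, l01_addl, l10_addr, l10_addl,
        l3_add1, l3_add2, l3_add3, l4_add1, l4_add2, l4_add3, l4_add4,
        l00_smulr, l00_smull, l01_smulr, l01_smull, l10_smulr, l10_smull,
        l3_smul1, l3_smul2, l3_smul3, l4_smul1, l4_smul2, l4_smul3, l4_smul4,
        Prod.mk_add_mk, Prod.smul_mk, Prod.mk.injEq, smul_add, smul_neg, neg_add] <;>
    refine ⟨trivial, by abel, trivial⟩
  src x y z u := rfl
  tgt x y z u := by
    have h := Q.cond1 x y z u
    refine Prod.ext rfl ?_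
    show (eta E T x y z u).2 + d2 (-Q.l4 x y z u) = (eps E T x y z u).2
    have h' : -(d2 (Q.l4 x y z u) - (eta E T x y z u).2 + (eps E T x y z u).2) = 0 := by
      rw [h, neg_zero]
    rw [map_neg, ← sub_eq_zero, ← h']
    abel
  anti12 x y z u := by simp only [← Q.anti12]
  anti23 x y z u := by simp only [← Q.anti23]
  anti34 x y z u := by simp only [← Q.anti34]
  mod4 x y z u f a := mod4goal E T Q hdd x y z u f a
  mod3 x y z u f a := mod3goal E T Q hdd x y z u f a
  mod2 x y z u f a := mod2goal E T Q hdd x y z u f a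
  mod1 x y z u f a := mod1goal E T Q hdd x y z u f a

end WithQ

section WithM
variable (M : Identiator E T)

lemma mu_fst (x y z u : V0) : (M.mu x y z u).1 = (eta E T x y z u).1 :=
  congrArg Prod.fst (M.src x y z u)

lemma mu_snd (x y z u : V0) : (M.mu x y z u).2.1 = (eta E T x y z u).2 :=
  congrArg Prod.snd (M.src x y z u)

lemma mu_thd (x y z u : V0) :
    (M.mu x y z u).2.1 + d2 (M.mu x y z u).2.2 = (eps E T x y z u).2 :=
  congrArg Prod.snd (M.tgt x y z u)

lemma mu_d1 (f : V1) (x y z : V0) : (M.mu (d1 f) x y z).2.2 = 0 := by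
  have h := congrArg (fun p => p.2.2) (M.mod1 0 x y z f 0)
  have h0 : M.mu 0 x y z = 0 := (M.quad.2.2.2 x y z).map_zero
  simp only [t1, t2, map_zero, add_zero, zero_add, comp02, Fq, Gq, br2, h0,
    l00_zeror, l01_zeror, l10_zeror, l02_zeror, l20_zeror,
    l00_zerol, l01_zerol, l10_zerol, l02_zerol, l20_zerol,
    Prod.snd_zero, Prod.fst_zero, add_zero, zero_add, Prod.mk_add_mk] at h
  simpa using h

/-- The `ℓ₄` associated with an Identiator. -/
def ofIden : Ell4 E T where
  l4 x y z u := -(M.mu x y z u).2.2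
  quad := by
    refine ⟨fun x y z => ⟨fun a b => ?_, fun c a => ?_⟩, fun x y u => ⟨fun a b => ?_, fun c a => ?_⟩,
      fun x z u => ⟨fun a b => ?_, fun c a => ?_⟩, fun y z u => ⟨fun a b => ?_, fun c a => ?_⟩⟩
    · rw [(M.quad.1 x y z).map_add]; simp [neg_add, add_comm]
    · rw [(M.quad.1 x y z).map_smul]; simp [smul_neg]
    · rw [(M.quad.2.1 x y u).map_add]; simp [neg_add, add_comm]
    · rw [(M.quad.2.1 x y u).map_smul]; simp [smul_neg]
    · rw [(M.quad.2.2.1 x z u).map_add]; simp [neg_add, add_comm]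
    · rw [(M.quad.2.2.1 x z u).map_smul]; simp [smul_neg]
    · rw [(M.quad.2.2.2 y z u).map_add]; simp [neg_add, add_comm]
    · rw [(M.quad.2.2.2 y z u).map_smul]; simp [smul_neg]
  anti12 x y z u := by rw [M.anti12]
  anti23 x y z u := by rw [M.anti23]
  anti34 x y z u := by rw [M.anti34]
  cond1 x y z u := by
    have hs := mu_snd E T M x y z u
    have ht := mu_thd E T M x y z u
    rw [map_neg, ← hs, ← ht]
    abel
  cond2 f x y z := by rw [mu_d1 E T M f x y z, neg_zero]

end WithM

lemma Ell4.ext' (A B : Ell4 E T) (h : A.l4 = B.l4) : A = B := by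
  cases A; cases B; cases h; rfl

lemma Identiator.ext' (A B : Identiator E T) (h : A.mu = B.mu) : A = B := by
  cases A; cases B; cases h; rfl

/-- The bijection. -/
def theEquiv (hdd : ∀ a, d1 (d2 a) = 0) : Ell4 E T ≃ Identiator E T where
  toFun Q := toIden E T Q hdd
  invFun M := ofIden E T M
  left_inv Q := by
    refine Ell4.ext' E T _ _ ?_
    funext x y z u
    simp [toIden, ofIden]
  right_inv M := by
    refine Identiator.ext' E T _ _ ?_
    funext x y z u
    refine Prod.ext ?_ (Prod.ext ?_ ?_)
    · exact (mu_fst E T M x y z u).symm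
    · exact (mu_snd E T M x y z u).symm
    · simp [toIden, ofIden]

end Lemmas
end GV
open GV

/-- The assignment `ℓ₄ ↦ μ`,
`μ_{xyzu} = ([[[x,y],z],u], h_{xyzu}, −ℓ₄(x,y,z,u))`, is a bijection between
antisymmetric quadrilinear maps `ℓ₄ : V₀⁴ → V₂` satisfying the L∞ condition `n = 4`
and skew-symmetric quadrilinear 2-modifications `μ : η ⇛ ε` (Identiators). -/
theorem identiator_ell4_correspondence (K : Type) [Field K]
    (V0 V1 V2 : Type) [AddCommGroup V0] [AddCommGroup V1] [AddCommGroup V2]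
    [Module K V0] [Module K V1] [Module K V2]
    (d1 : V1 →ₗ[K] V0) (d2 : V2 →ₗ[K] V1) (hdd : ∀ a, d1 (d2 a) = 0)
    (E : Ell2 K V0 V1 V2 d1 d2) (T : Ell3 E) :
    ∃ Φ : Ell4 E T ≃ Identiator E T,
      ∀ (Q : Ell4 E T) (x y z u : V0),
        (Φ Q).mu x y z u =
          ((eta E T x y z u).1, (eta E T x y z u).2, -Q.l4 x y z u) := by
  exact ⟨theEquiv E T hdd, fun Q x y z u => rfl⟩
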